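/- In the group U = ²G₂^syl(q) with multiplication Y(t₁,t₃,t₄)·Y(s₁,s₃,s₄) = Y(t₁+s₁, t₃+s₃−t₁s₁^(3θ), t₄+s₄+t₁s₁^(3θ+1)−t₁²s₁^(3θ)−t₃s₁), the commutator [Y(t₁,t₃,t₄), Y(s₁,s₃,s₄)] = x⁻¹y⁻¹xy equals Y(0, t₁^(3θ)s₁ − t₁s₁^(3θ), (t₁s₁^(3θ+1) − t₁^(3θ+1)s₁) + (t₁^(3θ)s₁² − t₁²s₁^(3θ)) + (t₁s₃ − t₃s₁)). -/
import Mathlib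


/-- The finite field with `3^(2m+1)` elements. -/
abbrev K (m : ℕ) := GaloisField 3 (2 * m + 1)

/-- Multiplication of `²G₂^syl(q)` in the coordinates `Y(t₁,t₃,t₄) ∈ F_q³`. -/
noncomputable def Ymul (m : ℕ) (x y : K m × K m × K m) : K m × K m × K m :=
  (x.1 + y.1,
   x.2.1 + y.2.1 - x.1 * y.1 ^ (3 ^ (m + 1)),
   x.2.2 + y.2.2 + x.1 * y.1 ^ (3 ^ (m + 1) + 1) - x.1 ^ 2 * y.1 ^ (3 ^ (m + 1)) -
     x.2.1 * y.1)

/-- Inversion of `²G₂^syl(q)`. -/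
noncomputable def Yinv (m : ℕ) (x : K m × K m × K m) : K m × K m × K m :=
  (-x.1, -x.2.1 - x.1 ^ (3 ^ (m + 1) + 1), -x.2.2 + x.1 ^ (3 ^ (m + 1) + 2) - x.1 * x.2.1)


/-- The commutator `[x,y] = x⁻¹y⁻¹xy` in `²G₂^syl(q)`. -/
theorem stmt_7 (m : ℕ) (t₁ t₃ t₄ s₁ s₃ s₄ : K m) :
    Ymul m (Ymul m (Ymul m (Yinv m (t₁, t₃, t₄)) (Yinv m (s₁, s₃, s₄))) (t₁, t₃, t₄))
        (s₁, s₃, s₄) =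
      (0, t₁ ^ (3 ^ (m + 1)) * s₁ - t₁ * s₁ ^ (3 ^ (m + 1)),
        (t₁ * s₁ ^ (3 ^ (m + 1) + 1) - t₁ ^ (3 ^ (m + 1) + 1) * s₁) +
          (t₁ ^ (3 ^ (m + 1)) * s₁ ^ 2 - t₁ ^ 2 * s₁ ^ (3 ^ (m + 1))) +
          (t₁ * s₃ - t₃ * s₁)) := by
  have h3 : (3 : K m) = 0 := by
    have := CharP.cast_eq_zero (K m) 3
    exact_mod_cast this
  have ho : Odd (3 ^ (m + 1)) := Odd.pow (by decide)
  have hne : ∀ x : K m, (-x) ^ (3 ^ (m + 1)) = -(x ^ (3 ^ (m + 1))) :=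
    fun x => Odd.neg_pow ho x
  have hne1 : ∀ x : K m, (-x) ^ (3 ^ (m + 1) + 1) = x ^ (3 ^ (m + 1) + 1) :=
    fun x => Even.neg_pow (ho.add_one) x
  simp only [Ymul, Yinv, Prod.mk.injEq, hne, hne1]
  refine ⟨by ring, by ring, ?_⟩
  linear_combination (-s₁ ^ 2 * t₁ ^ (3 ^ (m + 1)) - t₁ * s₁ * t₁ ^ (3 ^ (m + 1))
    + t₁ ^ 2 * s₁ ^ (3 ^ (m + 1))) * h3
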